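/- Let A ∈ ℝ^{2n×2n} be symmetric positive definite, partitioned into n×n blocks as A = [[A₁₁, A₁₂],[A₁₂ᵀ, A₂₂]], let S := A₂₂ − A₁₂ᵀ A₁₁⁻¹ A₁₂ and W := A₁₁⁻¹A₁₂. Then ‖A₁₁⁻¹ − S‖₂ ≤ ‖A₁₁⁻¹‖₂ · (‖W‖₂ + 1) · ‖Ω(A)‖₂, where Ω(A) := AᵀJA − J. -/

import Mathlib

open Matrix

/-- Spectral norm (ℓ² operator norm) of a real square matrix. -/
noncomputable def specNorm {m : Type*} [Fintype m] [DecidableEq m] (M : Matrix m m ℝ) : ℝ :=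
  ‖LinearMap.toContinuousLinearMap (Matrix.toEuclideanLin M)‖

/-- Frobenius norm of a real square matrix. -/
noncomputable def frobNorm {m : Type*} [Fintype m] (M : Matrix m m ℝ) : ℝ :=
  Real.sqrt (∑ i, ∑ j, (M i j) ^ 2)

/-- Spectral condition number κ₂(M) = ‖M⁻¹‖₂ ‖M‖₂. -/
noncomputable def cond2 {m : Type*} [Fintype m] [DecidableEq m] (M : Matrix m m ℝ) : ℝ :=
  specNorm M⁻¹ * specNorm M

/-- Spectral radius of a real square matrix (via its complex spectrum). -/
noncomputable def specRad {m : Type*} [Fintype m] [DecidableEq m] (M : Matrix m m ℝ) : ℝ :=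
  (spectralRadius ℂ (M.map (Complex.ofReal ·))).toReal

/-- Lower triangular predicate. -/
def LowerTri {k : ℕ} (M : Matrix (Fin k) (Fin k) ℝ) : Prop := ∀ i j, i < j → M i j = 0
/-- Upper triangular predicate. -/
def UpperTri {k : ℕ} (M : Matrix (Fin k) (Fin k) ℝ) : Prop := ∀ i j, j < i → M i j = 0
/-- Positive diagonal entries predicate. -/
def PosDiag {k : ℕ} (M : Matrix (Fin k) (Fin k) ℝ) : Prop := ∀ i, 0 < M i i

/-- The standard symplectic matrix J = [[0, I], [-I, 0]]. -/
noncomputable def Jmat (n : ℕ) : Matrix (Fin n ⊕ Fin n) (Fin n ⊕ Fin n) ℝ :=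
  fromBlocks 0 1 (-1) 0

/-- M is symplectic iff MᵀJM = J. -/
def IsSymplectic {n : ℕ} (M : Matrix (Fin n ⊕ Fin n) (Fin n ⊕ Fin n) ℝ) : Prop :=
  Mᵀ * Jmat n * M = Jmat n

/-- Ω(M) = MᵀJM − J, the loss of symplecticity. -/
noncomputable def Omega {n : ℕ} (M : Matrix (Fin n ⊕ Fin n) (Fin n ⊕ Fin n) ℝ) :
    Matrix (Fin n ⊕ Fin n) (Fin n ⊕ Fin n) ℝ :=
  Mᵀ * Jmat n * M - Jmat n

section Aux
open scoped Matrix.Norms.L2Operator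
variable {α : Type*} [Fintype α] [DecidableEq α]

lemma specNorm_eq_l2 (M : Matrix α α ℝ) : specNorm M = ‖M‖ := rfl

noncomputable def embL (α : Type*) [Fintype α] [DecidableEq α] : Matrix (α ⊕ α) α ℝ :=
  Matrix.of fun i j => if i = Sum.inl j then 1 else 0

noncomputable def embR (α : Type*) [Fintype α] [DecidableEq α] : Matrix (α ⊕ α) α ℝ :=
  Matrix.of fun i j => if i = Sum.inr j then 1 else 0

lemma embL_tr_mul : (embL α)ᵀ * embL α = 1 := by
  ext a b
  simp [embL, Matrix.mul_apply, Fintype.sum_sum_type, Matrix.one_apply, eq_comm]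

lemma embR_tr_mul : (embR α)ᵀ * embR α = 1 := by
  ext a b
  simp [embR, Matrix.mul_apply, Fintype.sum_sum_type, Matrix.one_apply, eq_comm]

lemma l2norm_one_le : ‖(1 : Matrix α α ℝ)‖ ≤ 1 := by
  rw [Matrix.cstar_norm_def, _root_.map_one]
  exact ContinuousLinearMap.norm_id_le

lemma l2norm_transpose {β : Type*} [Fintype β] [DecidableEq β] (A : Matrix β α ℝ) :
    ‖Aᵀ‖ = ‖A‖ := by
  rw [← Matrix.conjTranspose_eq_transpose_of_trivial, Matrix.l2_opNorm_conjTranspose]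

lemma mul3_le {a b c : ℝ} (ha : a ≤ 1) (hc : c ≤ 1) (ha0 : 0 ≤ a) (_hc0 : 0 ≤ c)
    (hb : 0 ≤ b) : a * b * c ≤ b := by
  have h1 : a * b ≤ b := by nlinarith
  have h2 : a * b * c ≤ a * b := by nlinarith [mul_nonneg ha0 hb]
  linarith

lemma embL_norm_le : ‖embL α‖ ≤ 1 := by
  have h : ‖embL α‖ * ‖embL α‖ = ‖(1 : Matrix α α ℝ)‖ := by
    rw [← Matrix.l2_opNorm_conjTranspose_mul_self,
      Matrix.conjTranspose_eq_transpose_of_trivial, embL_tr_mul]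
  nlinarith [norm_nonneg (embL α), l2norm_one_le (α := α)]

lemma embR_norm_le : ‖embR α‖ ≤ 1 := by
  have h : ‖embR α‖ * ‖embR α‖ = ‖(1 : Matrix α α ℝ)‖ := by
    rw [← Matrix.l2_opNorm_conjTranspose_mul_self,
      Matrix.conjTranspose_eq_transpose_of_trivial, embR_tr_mul]
  nlinarith [norm_nonneg (embR α), l2norm_one_le (α := α)]

lemma embL_tr_norm_le : ‖(embL α)ᵀ‖ ≤ 1 := by rw [l2norm_transpose]; exact embL_norm_le

lemma embR_tr_norm_le : ‖(embR α)ᵀ‖ ≤ 1 := by rw [l2norm_transpose]; exact embR_norm_le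

lemma block11_eq (M : Matrix α α ℝ) :
    (fromBlocks M 0 0 0 : Matrix (α ⊕ α) (α ⊕ α) ℝ) = embL α * M * (embL α)ᵀ := by
  ext (i | i) (j | j) <;>
    simp [embL, Matrix.mul_apply, fromBlocks, Fintype.sum_sum_type]

lemma block12_one_eq : (fromBlocks 0 1 0 0 : Matrix (α ⊕ α) (α ⊕ α) ℝ) = embL α * (embR α)ᵀ := by
  ext (i | i) (j | j) <;>
    simp [embL, embR, Matrix.mul_apply, fromBlocks, Matrix.one_apply]

lemma norm_block11_le (M : Matrix α α ℝ) :
    ‖(fromBlocks M 0 0 0 : Matrix (α ⊕ α) (α ⊕ α) ℝ)‖ ≤ ‖M‖ := by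
  rw [block11_eq]
  calc ‖embL α * M * (embL α)ᵀ‖ ≤ ‖embL α * M‖ * ‖(embL α)ᵀ‖ := Matrix.l2_opNorm_mul _ _
    _ ≤ ‖embL α‖ * ‖M‖ * ‖(embL α)ᵀ‖ :=
        mul_le_mul_of_nonneg_right (Matrix.l2_opNorm_mul _ _) (norm_nonneg _)
    _ ≤ ‖M‖ := mul3_le embL_norm_le embL_tr_norm_le (norm_nonneg _) (norm_nonneg _)
        (norm_nonneg _)

lemma le_norm_block11 (M : Matrix α α ℝ) :
    ‖M‖ ≤ ‖(fromBlocks M 0 0 0 : Matrix (α ⊕ α) (α ⊕ α) ℝ)‖ := by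
  have hM : M = (embL α)ᵀ * ((fromBlocks M 0 0 0 : Matrix (α ⊕ α) (α ⊕ α) ℝ)) * embL α := by
    rw [block11_eq,
      show (embL α)ᵀ * (embL α * M * (embL α)ᵀ) * embL α
        = ((embL α)ᵀ * embL α) * M * ((embL α)ᵀ * embL α) by
          simp only [← Matrix.mul_assoc],
      embL_tr_mul, one_mul, mul_one]
  calc ‖M‖ = ‖(embL α)ᵀ * (fromBlocks M 0 0 0 : Matrix (α ⊕ α) (α ⊕ α) ℝ) * embL α‖ := by rw [← hM]
    _ ≤ ‖(embL α)ᵀ * (fromBlocks M 0 0 0 : Matrix (α ⊕ α) (α ⊕ α) ℝ)‖ * ‖embL α‖ := Matrix.l2_opNorm_mul _ _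
    _ ≤ ‖(embL α)ᵀ‖ * ‖(fromBlocks M 0 0 0 : Matrix (α ⊕ α) (α ⊕ α) ℝ)‖ * ‖embL α‖ :=
        mul_le_mul_of_nonneg_right (Matrix.l2_opNorm_mul _ _) (norm_nonneg _)
    _ ≤ ‖(fromBlocks M 0 0 0 : Matrix (α ⊕ α) (α ⊕ α) ℝ)‖ := mul3_le embL_tr_norm_le
        embL_norm_le (norm_nonneg _) (norm_nonneg _) (norm_nonneg _)

lemma norm_block11 (M : Matrix α α ℝ) :
    ‖(fromBlocks M 0 0 0 : Matrix (α ⊕ α) (α ⊕ α) ℝ)‖ = ‖M‖ :=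
  le_antisymm (norm_block11_le M) (le_norm_block11 M)

lemma norm_block12_one_le : ‖(fromBlocks 0 1 0 0 : Matrix (α ⊕ α) (α ⊕ α) ℝ)‖ ≤ 1 := by
  rw [block12_one_eq]
  calc ‖embL α * (embR α)ᵀ‖ ≤ ‖embL α‖ * ‖(embR α)ᵀ‖ := Matrix.l2_opNorm_mul _ _
    _ ≤ 1 := mul_le_one₀ embL_norm_le (norm_nonneg _) embR_tr_norm_le

lemma ringkey {R : Type*} [Ring R] (X A11 A12 T A22 : R) (h1 : X * A11 = 1) (h2 : A11 * X = 1) :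
    X - (A22 - T * X * A12) =
      (-(T * X) * (A11 * T - A12 * A11) + 1 * (T * T - A22 * A11 + 1)) * X := by
  have e1 : T * X * A11 = T := by rw [mul_assoc, h1, mul_one]
  have e3 : T * X * A12 * A11 * X = T * X * A12 := by rw [mul_assoc, h2, mul_one]
  have e2 : A22 * A11 * X = A22 := by rw [mul_assoc, h2, mul_one]
  have expand : (-(T * X) * (A11 * T - A12 * A11) + 1 * (T * T - A22 * A11 + 1)) * X
      = -(T * X * A11 * (T * X)) + T * X * A12 * A11 * X + T * T * X - A22 * A11 * X + X := by
    noncomm_ring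
  rw [expand, e1, e3, e2]
  noncomm_ring

lemma omega_blocks {n : ℕ} (A11 A12 A22 : Matrix (Fin n) (Fin n) ℝ)
    (hsym : (fromBlocks A11 A12 A12ᵀ A22)ᵀ = fromBlocks A11 A12 A12ᵀ A22) :
    Omega (fromBlocks A11 A12 A12ᵀ A22) =
      fromBlocks (A11 * A12ᵀ - A12 * A11) (A11 * A22 - A12 * A12 - 1)
        (A12ᵀ * A12ᵀ - A22 * A11 + 1) (A12ᵀ * A22 - A22 * A12) := by
  rw [Omega, hsym, Jmat, Matrix.mul_assoc, Matrix.fromBlocks_multiply,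
    Matrix.fromBlocks_multiply]
  ext (i | i) (j | j) <;>
    simp [Matrix.fromBlocks, Matrix.sub_apply, Matrix.add_apply, Matrix.neg_apply,
      Matrix.one_apply, mul_comm] <;> ring

end Aux

/-- ‖A₁₁⁻¹ − S‖₂ ≤ ‖A₁₁⁻¹‖₂ (‖W‖₂ + 1) ‖Ω(A)‖₂ with W = A₁₁⁻¹A₁₂ and S the
Schur complement of A₁₁ in A. -/
theorem stmt12 {n : ℕ} (hn : 1 ≤ n)
    (A11 A12 A22 : Matrix (Fin n) (Fin n) ℝ)
    (A : Matrix (Fin n ⊕ Fin n) (Fin n ⊕ Fin n) ℝ)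
    (hA : A = fromBlocks A11 A12 A12ᵀ A22)
    (hpd : A.PosDef) :
    specNorm (A11⁻¹ - (A22 - A12ᵀ * A11⁻¹ * A12)) ≤
      specNorm A11⁻¹ * (specNorm (A11⁻¹ * A12) + 1) * specNorm (Omega A) := by
  open scoped Matrix.Norms.L2Operator in
  have hAT : Aᵀ = A := by
    rw [← Matrix.conjTranspose_eq_transpose_of_trivial]; exact hpd.1
  have hsymA : (fromBlocks A11 A12 A12ᵀ A22)ᵀ = fromBlocks A11 A12 A12ᵀ A22 := by
    rw [← hA]; exact hAT
  have hsym11 : A11ᵀ = A11 := by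
    have h := hsymA
    rw [Matrix.fromBlocks_transpose] at h
    exact (Matrix.fromBlocks_inj.mp h).1
  -- A11 is positive definite
  have hA11 : A11.PosDef := by
    refine Matrix.posDef_iff_dotProduct_mulVec.mpr ⟨?_, ?_⟩
    · rw [Matrix.IsHermitian, Matrix.conjTranspose_eq_transpose_of_trivial]; exact hsym11
    · intro x hx
      have hv : (Sum.elim x 0 : Fin n ⊕ Fin n → ℝ) ≠ 0 := by
        intro h
        exact hx (funext fun i => congrFun h (Sum.inl i))
      have h := hpd.dotProduct_mulVec_pos hv
      rw [hA] at h
      simpa [Matrix.fromBlocks_mulVec, sumElim_dotProduct_sumElim] using h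
  have hdet : IsUnit A11.det := hA11.det_pos.ne'.isUnit
  have h1 : A11⁻¹ * A11 = 1 := Matrix.nonsing_inv_mul _ hdet
  have h2 : A11 * A11⁻¹ = 1 := Matrix.mul_nonsing_inv _ hdet
  have hXT : (A11⁻¹)ᵀ = A11⁻¹ := by rw [Matrix.transpose_nonsing_inv, hsym11]
  set X := A11⁻¹ with hX
  set T := A12ᵀ with hT
  -- the key block identity
  have hkey : (fromBlocks (X - (A22 - T * X * A12)) 0 0 0 :
        Matrix (Fin n ⊕ Fin n) (Fin n ⊕ Fin n) ℝ)
      = (fromBlocks (-(T * X)) 1 0 0) * Omega A * (fromBlocks X 0 0 0) := by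
    rw [hA, omega_blocks _ _ _ hsymA, Matrix.fromBlocks_multiply, Matrix.fromBlocks_multiply]
    refine Matrix.fromBlocks_inj.mpr ⟨?_, ?_, ?_, ?_⟩
    · rw [Matrix.mul_zero, add_zero]
      exact ringkey X A11 A12 T A22 h1 h2
    · simp
    · simp
    · simp
  -- pass to norms
  simp only [specNorm_eq_l2]
  have e1 : ‖X - (A22 - T * X * A12)‖
      = ‖(fromBlocks (X - (A22 - T * X * A12)) 0 0 0 :
          Matrix (Fin n ⊕ Fin n) (Fin n ⊕ Fin n) ℝ)‖ := (norm_block11 _).symm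
  have hTX : ‖T * X‖ = ‖X * A12‖ := by
    rw [show T * X = (X * A12)ᵀ by rw [Matrix.transpose_mul, hXT], l2norm_transpose]
  have hBsplit : (fromBlocks (-(T * X)) 1 0 0 : Matrix (Fin n ⊕ Fin n) (Fin n ⊕ Fin n) ℝ)
      = fromBlocks (-(T * X)) 0 0 0 + fromBlocks 0 1 0 0 := by
    rw [Matrix.fromBlocks_add]
    simp
  have hB : ‖(fromBlocks (-(T * X)) 1 0 0 : Matrix (Fin n ⊕ Fin n) (Fin n ⊕ Fin n) ℝ)‖
      ≤ ‖X * A12‖ + 1 := by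
    rw [hBsplit]
    calc ‖(fromBlocks (-(T * X)) 0 0 0 + fromBlocks 0 1 0 0 :
          Matrix (Fin n ⊕ Fin n) (Fin n ⊕ Fin n) ℝ)‖
        ≤ ‖(fromBlocks (-(T * X)) 0 0 0 : Matrix (Fin n ⊕ Fin n) (Fin n ⊕ Fin n) ℝ)‖
          + ‖(fromBlocks 0 1 0 0 : Matrix (Fin n ⊕ Fin n) (Fin n ⊕ Fin n) ℝ)‖ := norm_add_le _ _
      _ ≤ ‖X * A12‖ + 1 := by
          have := norm_block11 (-(T * X))
          rw [norm_neg, hTX] at this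
          linarith [norm_block12_one_le (α := Fin n), le_of_eq this]
  calc ‖X - (A22 - T * X * A12)‖
      = ‖(fromBlocks (-(T * X)) 1 0 0) * Omega A * (fromBlocks X 0 0 0)‖ := by
        rw [e1, hkey]
    _ ≤ ‖(fromBlocks (-(T * X)) 1 0 0 : Matrix (Fin n ⊕ Fin n) (Fin n ⊕ Fin n) ℝ) * Omega A‖
        * ‖(fromBlocks X 0 0 0 : Matrix (Fin n ⊕ Fin n) (Fin n ⊕ Fin n) ℝ)‖ :=
        Matrix.l2_opNorm_mul _ _
    _ ≤ ‖(fromBlocks (-(T * X)) 1 0 0 : Matrix (Fin n ⊕ Fin n) (Fin n ⊕ Fin n) ℝ)‖ * ‖Omega A‖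
        * ‖(fromBlocks X 0 0 0 : Matrix (Fin n ⊕ Fin n) (Fin n ⊕ Fin n) ℝ)‖ :=
        mul_le_mul_of_nonneg_right (Matrix.l2_opNorm_mul _ _) (norm_nonneg _)
    _ ≤ (‖X * A12‖ + 1) * ‖Omega A‖ * ‖X‖ := by
        rw [norm_block11]
        exact mul_le_mul_of_nonneg_right
          (mul_le_mul_of_nonneg_right hB (norm_nonneg _)) (norm_nonneg _)
    _ = ‖X‖ * (‖X * A12‖ + 1) * ‖Omega A‖ := by ring
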